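/- Let G = (V, E) be a finite simple undirected graph with |V| = n. Consider the MILP formulation: minimize ∑_{v ∈ V} f_v over all feasible solutions x of the pairwise formulation and all real numbers f_v (v ∈ V) satisfying f_v ≥ u_i(∑_{u ∈ V, u ≠ v} x_{uv}) for every integer i with 0 ≤ i ≤ n − 1. The optimal value of this MILP equals the chromatic number χ(G). -/

import Mathlib

open Finset

/-- Counting lemma: summing `1/|fiber of v|` over all `v` counts the number of fibers. -/
lemma sum_inv_fiber_card {V α : Type*} [Fintype V] [DecidableEq α] (C : V → α) :
    ∑ v : V, (1 : ℝ) / ((univ.filter fun w => C w = C v).card : ℝ)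
      = ((univ.image C).card : ℝ) := by
  classical
  rw [← Finset.sum_fiberwise_of_maps_to (g := C) (t := univ.image C)
      (fun v _ => mem_image_of_mem C (mem_univ v))
      (fun v => (1 : ℝ) / ((univ.filter fun w => C w = C v).card : ℝ))]
  have h : ∀ b ∈ univ.image C,
      (∑ v ∈ univ.filter fun v => C v = b,
        (1 : ℝ) / ((univ.filter fun w => C w = C v).card : ℝ)) = 1 := by
    intro b hb
    have h1 : ∀ v ∈ univ.filter fun v => C v = b,
        (1 : ℝ) / ((univ.filter fun w => C w = C v).card : ℝ)
          = 1 / ((univ.filter fun w => C w = b).card : ℝ) := by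
      intro v hv
      rw [(mem_filter.1 hv).2]
    rw [Finset.sum_congr rfl h1, Finset.sum_const, nsmul_eq_mul]
    have hpos : 0 < (univ.filter fun w => C w = b).card := by
      obtain ⟨v, -, rfl⟩ := mem_image.1 hb
      exact card_pos.2 ⟨v, mem_filter.2 ⟨mem_univ v, rfl⟩⟩
    field_simp
  rw [Finset.sum_congr rfl h, Finset.sum_const, nsmul_eq_mul, mul_one]

/-- Key algebraic inequality: `u_i(k-1) ≤ 1/k` for integers `k ≥ 1`, `i ≥ 0`. -/
lemma key_ineq (k i : ℕ) (hk : 1 ≤ k) :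
    -(((k : ℝ) - 1) - (i : ℝ)) / (((i : ℝ) + 1) * ((i : ℝ) + 2)) + 1 / ((i : ℝ) + 1)
      ≤ 1 / (k : ℝ) := by
  have hk' : (1 : ℝ) ≤ (k : ℝ) := by exact_mod_cast hk
  have hi1 : (0 : ℝ) < (i : ℝ) + 1 := by positivity
  have hi2 : (0 : ℝ) < (i : ℝ) + 2 := by positivity
  have hkpos : (0 : ℝ) < (k : ℝ) := by linarith
  have key : (0 : ℝ) ≤ ((k : ℝ) - (i : ℝ) - 1) * ((k : ℝ) - (i : ℝ) - 2) := by
    rcases le_or_gt k (i + 1) with h | h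
    · have h' : (k : ℝ) ≤ (i : ℝ) + 1 := by exact_mod_cast h
      nlinarith
    · have h' : (i : ℝ) + 2 ≤ (k : ℝ) := by exact_mod_cast h
      nlinarith
  rw [div_add_div _ _ (by positivity) hi1.ne', div_le_div_iff₀ (by positivity) hkpos]
  nlinarith [mul_nonneg hi1.le key]

/-- Lower bound: any feasible solution of the MILP has objective at least the chromatic
number. -/
lemma milp_lb {V : Type*} [Fintype V] [DecidableEq V] (G : SimpleGraph V)
    (n : ℕ) (hn : n = Fintype.card V)
    (u : ℕ → ℝ → ℝ)
    (hu : ∀ (i : ℕ) (d : ℝ),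
      u i d = -(d - (i : ℝ)) / (((i : ℝ) + 1) * ((i : ℝ) + 2)) + 1 / ((i : ℝ) + 1))
    (x : V → V → ℝ) (f : V → ℝ)
    (hsym : ∀ a b : V, x a b = x b a)
    (h01 : ∀ a b : V, a ≠ b → x a b = 0 ∨ x a b = 1)
    (hadj : ∀ a b : V, G.Adj a b → x a b = 0)
    (htri : ∀ a b c : V, a ≠ b → b ≠ c → a ≠ c → x a b + x b c - x a c ≤ 1)
    (hf : ∀ v : V, ∀ i : ℕ, i ≤ n - 1 → f v ≥ u i (∑ w ∈ univ.filter (· ≠ v), x w v)) :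
    (G.chromaticNumber.toNat : ℝ) ≤ ∑ v : V, f v := by
  classical
  set cls : V → Finset V := fun v => univ.filter (fun w => w = v ∨ x w v = 1) with hclsdef
  have hmem : ∀ a v : V, a ∈ cls v ↔ (a = v ∨ x a v = 1) := by
    intro a v; simp [hclsdef]
  have hself : ∀ v : V, v ∈ cls v := fun v => (hmem v v).2 (Or.inl rfl)
  have hRsym : ∀ a b : V, (a = b ∨ x a b = 1) → (b = a ∨ x b a = 1) := by
    rintro a b (rfl | h)
    · exact Or.inl rfl
    · exact Or.inr (by rw [hsym b a]; exact h)
  have hRtrans : ∀ a b c : V, (a = b ∨ x a b = 1) → (b = c ∨ x b c = 1) →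
      (a = c ∨ x a c = 1) := by
    rintro a b c (rfl | h1) h2
    · exact h2
    rcases h2 with rfl | h2
    · exact Or.inr h1
    by_cases hab : a = b
    · subst hab; exact Or.inr h2
    by_cases hbc : b = c
    · subst hbc; exact Or.inr h1
    by_cases hac : a = c
    · exact Or.inl hac
    have ht := htri a b c hab hbc hac
    rcases h01 a c hac with h | h
    · exfalso; rw [h1, h2, h] at ht; linarith
    · exact Or.inr h
  have hclseq : ∀ v w : V, (w = v ∨ x w v = 1) → cls w = cls v := by
    intro v w h
    ext a
    rw [hmem, hmem]
    exact ⟨fun ha => hRtrans a w v ha h, fun ha => hRtrans a v w ha (hRsym w v h)⟩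
  have hclseq' : ∀ v w : V, cls w = cls v → (w = v ∨ x w v = 1) := by
    intro v w h
    exact (hmem w v).1 (h ▸ hself w)
  have hfiber : ∀ v : V, (univ.filter fun w => cls w = cls v) = cls v := by
    intro v
    ext a
    simp only [mem_filter, mem_univ, true_and]
    rw [hmem]
    exact ⟨hclseq' v a, hclseq v a⟩
  -- the classes give a proper coloring
  have hcol : G.Colorable (univ.image cls).card := by
    have C : G.Coloring {s // s ∈ univ.image cls} :=
      SimpleGraph.Coloring.mk (fun v => ⟨cls v, mem_image_of_mem cls (mem_univ v)⟩)
        (by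
          intro a b hab hEq
          have heq : cls a = cls b := congrArg Subtype.val hEq
          rcases hclseq' b a heq with rfl | h1
          · exact G.loopless.irrefl _ hab
          · rw [hadj a b hab] at h1; norm_num at h1)
    simpa only [Fintype.card_coe] using C.colorable
  have hchi : G.chromaticNumber.toNat ≤ (univ.image cls).card := by
    have h := hcol.chromaticNumber_le
    have h2 := ENat.toNat_le_toNat h (by simp)
    simpa using h2
  -- per-vertex bound
  have hv : ∀ v : V, 1 / (((cls v).card : ℕ) : ℝ) ≤ f v := by
    intro v
    set k := (cls v).card with hk
    have hk1 : 1 ≤ k := card_pos.2 ⟨v, hself v⟩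
    have hd : (∑ w ∈ univ.filter (· ≠ v), x w v) = (k : ℝ) - 1 := by
      have hsplit : cls v = insert v (univ.filter fun w => w ≠ v ∧ x w v = 1) := by
        ext a
        rw [hmem]
        simp only [mem_insert, mem_filter, mem_univ, true_and]
        constructor
        · rintro (rfl | h)
          · exact Or.inl rfl
          · by_cases h' : a = v
            · exact Or.inl h'
            · exact Or.inr ⟨h', h⟩
        · rintro (rfl | ⟨h1, h2⟩)
          · exact Or.inl rfl
          · exact Or.inr h2
      have hnot : v ∉ univ.filter (fun w => w ≠ v ∧ x w v = 1) := by simp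
      have hkcard : k = (univ.filter fun w => w ≠ v ∧ x w v = 1).card + 1 := by
        rw [hk, hsplit, card_insert_of_notMem hnot]
      have hsum : (∑ w ∈ univ.filter (· ≠ v), x w v)
          = ∑ w ∈ univ.filter (· ≠ v), (if x w v = 1 then (1 : ℝ) else 0) := by
        refine Finset.sum_congr rfl fun w hw => ?_
        have hw' : w ≠ v := (mem_filter.1 hw).2
        rcases h01 w v hw' with h | h <;> simp [h]
      rw [hsum, Finset.sum_boole, Finset.filter_filter, hkcard]
      push_cast
      ring
    have hkn : k - 1 ≤ n - 1 := by
      refine Nat.sub_le_sub_right ?_ 1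
      rw [hn, hk]
      exact card_le_univ (cls v)
    have hfv := hf v (k - 1) hkn
    rw [hu, hd] at hfv
    have hcast : ((k - 1 : ℕ) : ℝ) = (k : ℝ) - 1 := by
      push_cast [hk1]
      ring
    rw [hcast] at hfv
    have he1 : ((k : ℝ) - 1) + 1 = (k : ℝ) := by ring
    rw [sub_self, neg_zero, zero_div, zero_add, he1] at hfv
    exact hfv
  -- combine
  have hsum := sum_inv_fiber_card cls
  have hsum' : (∑ v : V, (1 : ℝ) / (((cls v).card : ℕ) : ℝ)) = ((univ.image cls).card : ℝ) := by
    rw [← hsum]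
    exact Finset.sum_congr rfl fun v _ => by rw [hfiber v]
  calc (G.chromaticNumber.toNat : ℝ) ≤ ((univ.image cls).card : ℝ) := by exact_mod_cast hchi
    _ = ∑ v : V, (1 : ℝ) / (((cls v).card : ℕ) : ℝ) := hsum'.symm
    _ ≤ ∑ v : V, f v := Finset.sum_le_sum fun v _ => hv v

/-- The optimal value of the MILP formulation (minimize `∑_v f_v` subject to the pairwise
feasibility constraints on `x` and `f_v ≥ u_i(∑_{u ≠ v} x u v)` for `0 ≤ i ≤ n - 1`)
equals the chromatic number of `G`. -/
theorem milp_optimal_value_eq_chromaticNumber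
    {V : Type*} [Fintype V] [DecidableEq V] (G : SimpleGraph V)
    (n : ℕ) (hn : n = Fintype.card V)
    (u : ℕ → ℝ → ℝ)
    (hu : ∀ (i : ℕ) (d : ℝ),
      u i d = -(d - (i : ℝ)) / (((i : ℝ) + 1) * ((i : ℝ) + 2)) + 1 / ((i : ℝ) + 1)) :
    IsLeast
      { s : ℝ | ∃ (x : V → V → ℝ) (f : V → ℝ),
          (∀ u v : V, x u v = x v u) ∧
          (∀ u v : V, u ≠ v → x u v = 0 ∨ x u v = 1) ∧
          (∀ u v : V, G.Adj u v → x u v = 0) ∧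
          (∀ u v w : V, u ≠ v → v ≠ w → u ≠ w → x u v + x v w - x u w ≤ 1) ∧
          (∀ v : V, ∀ i : ℕ, i ≤ n - 1 → f v ≥ u i (∑ w ∈ univ.filter (· ≠ v), x w v)) ∧
          s = ∑ v : V, f v }
      (G.chromaticNumber.toNat : ℝ) := by
  classical
  set m := G.chromaticNumber.toNat with hm
  obtain ⟨C⟩ := G.colorable_chromaticNumber_of_fintype
  set x : V → V → ℝ := fun a b => if a ≠ b ∧ C a = C b then 1 else 0 with hx
  set f : V → ℝ := fun v => 1 / ((univ.filter fun w => C w = C v).card : ℝ) with hfdef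
  have hsym : ∀ a b : V, x a b = x b a := by
    intro a b
    have hiff : (a ≠ b ∧ C a = C b) ↔ (b ≠ a ∧ C b = C a) := by
      constructor <;> rintro ⟨h1, h2⟩ <;> exact ⟨h1.symm, h2.symm⟩
    simp only [hx]
    rw [if_congr hiff rfl rfl]
  have h01 : ∀ a b : V, a ≠ b → x a b = 0 ∨ x a b = 1 := by
    intro a b _
    simp only [hx]
    split_ifs <;> simp
  have hadj : ∀ a b : V, G.Adj a b → x a b = 0 := by
    intro a b h
    simp only [hx]
    rw [if_neg]
    rintro ⟨-, he⟩
    exact C.valid h he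
  have htri : ∀ a b c : V, a ≠ b → b ≠ c → a ≠ c → x a b + x b c - x a c ≤ 1 := by
    intro a b c hab hbc hac
    by_cases h1 : (a ≠ b ∧ C a = C b)
    · by_cases h2 : (b ≠ c ∧ C b = C c)
      · have h3 : (a ≠ c ∧ C a = C c) := ⟨hac, h1.2.trans h2.2⟩
        simp only [hx, if_pos h1, if_pos h2, if_pos h3]
        norm_num
      · simp only [hx, if_pos h1, if_neg h2]
        split_ifs <;> norm_num
    · simp only [hx, if_neg h1]
      split_ifs <;> norm_num
  have hfcon : ∀ v : V, ∀ i : ℕ, i ≤ n - 1 →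
      f v ≥ u i (∑ w ∈ univ.filter (· ≠ v), x w v) := by
    intro v i _
    set k := (univ.filter fun w => C w = C v).card with hk
    have hk1 : 1 ≤ k := card_pos.2 ⟨v, mem_filter.2 ⟨mem_univ v, rfl⟩⟩
    have hd : (∑ w ∈ univ.filter (· ≠ v), x w v) = (k : ℝ) - 1 := by
      have hstep : ∀ w ∈ univ.filter (· ≠ v),
          x w v = if C w = C v then (1 : ℝ) else 0 := by
        intro w hw
        have hw' : w ≠ v := (mem_filter.1 hw).2
        simp only [hx]
        by_cases h : C w = C v <;> simp [h, hw']
      have hsplit : (univ.filter fun w => C w = C v)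
          = insert v (univ.filter fun w => w ≠ v ∧ C w = C v) := by
        ext a
        simp only [mem_insert, mem_filter, mem_univ, true_and]
        constructor
        · intro h
          by_cases h' : a = v
          · exact Or.inl h'
          · exact Or.inr ⟨h', h⟩
        · rintro (rfl | ⟨h1, h2⟩)
          · rfl
          · exact h2
      have hnot : v ∉ univ.filter (fun w => w ≠ v ∧ C w = C v) := by simp
      have hkcard : k = (univ.filter fun w => w ≠ v ∧ C w = C v).card + 1 := by
        rw [hk, hsplit, card_insert_of_notMem hnot]
      rw [Finset.sum_congr rfl hstep, Finset.sum_boole, Finset.filter_filter, hkcard]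
      push_cast
      ring
    have hfv : f v = 1 / (k : ℝ) := by rw [hfdef]
    rw [hu, hd, hfv]
    exact key_ineq k i hk1
  have hsum : (∑ v : V, f v) = ((univ.image C).card : ℝ) := by
    simp only [hfdef]
    exact sum_inv_fiber_card C
  have hle : ((univ.image C).card : ℝ) ≤ (m : ℝ) := by
    have h : (univ.image C).card ≤ m := by
      calc (univ.image C).card ≤ (univ : Finset (Fin m)).card := card_le_card (subset_univ _)
        _ = m := by simp
    exact_mod_cast h
  have hge := milp_lb G n hn u hu x f hsym h01 hadj htri hfcon
  constructor
  · exact ⟨x, f, hsym, h01, hadj, htri, hfcon,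
      le_antisymm hge (by rw [hsum]; exact hle)⟩
  · rintro s ⟨x', f', a1, a2, a3, a4, a5, rfl⟩
    exact milp_lb G n hn u hu x' f' a1 a2 a3 a4 a5
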